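/- Every monomial t^n·x^m (n, m ≥ 0) lies in the linear span of the products {P_{i,k}(t)·H_k(x,t) : i ≥ 0, 0 ≤ k ≤ m}, where for each k, {P_{i,k}}_{i≥0} is any basis of polynomials in t whose span contains all polynomials in t. Consequently the products P_{i,k}(t)H_k(x,t) span all polynomials in (x,t). -/

import Mathlib

/-- The 2D Hermite polynomials, satisfying
`x·H_k(x,t) = (k+1)H_{k+1}(x,t) + t·H_{k−1}(x,t)`, `H_0 = 1`, `H_1(x,t) = x`. -/
noncomputable def hermite2D : ℕ → ℝ → ℝ → ℝ
  | 0, _, _ => 1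
  | 1, x, _ => x
  | n + 2, x, t => (x * hermite2D (n + 1) x t - t * hermite2D n x t) / ((n : ℝ) + 2)

/-- Multiplication by `x` as a linear map on functions `ℝ × ℝ → ℝ`. -/
noncomputable def mulX : ((ℝ × ℝ) → ℝ) →ₗ[ℝ] ((ℝ × ℝ) → ℝ) where
  toFun f := fun p => p.1 * f p
  map_add' f g := by funext p; simp [mul_add]
  map_smul' c f := by funext p; simp [mul_comm, mul_left_comm]

/-- Multiplication by `H_k` (with substitution) as a linear map. -/
noncomputable def mulH (k : ℕ) : (ℝ → ℝ) →ₗ[ℝ] ((ℝ × ℝ) → ℝ) where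
  toFun g := fun p => g p.2 * hermite2D k p.1 p.2
  map_add' f g := by funext p; simp [add_mul]
  map_smul' c f := by funext p; simp [mul_assoc]

lemma hermite_rec (k : ℕ) (x t : ℝ) :
    x * hermite2D (k + 1) x t =
      ((k : ℝ) + 2) * hermite2D (k + 2) x t + t * hermite2D k x t := by
  have h : hermite2D (k + 2) x t
      = (x * hermite2D (k + 1) x t - t * hermite2D k x t) / ((k : ℝ) + 2) := rfl
  rw [h]
  have hk : ((k : ℝ) + 2) ≠ 0 := by positivity
  field_simp
  ring

/-- Every monomial `t^n·x^m` lies in the linear span of the products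
`{P_{i,k}(t)·H_k(x,t) : i ≥ 0, 0 ≤ k ≤ m}`, where for each `k` the family
`{P_{i,k}}_{i≥0}` spans all polynomials in `t`.  (Functions of `(x,t) ∈ ℝ × ℝ`.) -/
theorem monomials_in_span_of_hermite_products
    (P : ℕ → ℕ → ℝ → ℝ)
    (hP : ∀ k j : ℕ, (fun t : ℝ => t ^ j) ∈
      Submodule.span ℝ (Set.range (fun i : ℕ => P i k))) :
    ∀ n m : ℕ, (fun p : ℝ × ℝ => p.2 ^ n * p.1 ^ m) ∈
      Submodule.span ℝ {f : ℝ × ℝ → ℝ | ∃ i k : ℕ, k ≤ m ∧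
        f = fun p : ℝ × ℝ => P i k p.2 * hermite2D k p.1 p.2} := by
  intro n m
  -- Step 1: monomials lie in the span of `t^j · H_k`, `k ≤ m`.
  have key : ∀ m n : ℕ, (fun p : ℝ × ℝ => p.2 ^ n * p.1 ^ m) ∈
      Submodule.span ℝ {f : ℝ × ℝ → ℝ | ∃ j k : ℕ, k ≤ m ∧
        f = fun p : ℝ × ℝ => p.2 ^ j * hermite2D k p.1 p.2} := by
    intro m
    induction m with
    | zero =>
      intro n
      exact Submodule.subset_span ⟨n, 0, le_refl 0, by funext p; simp [hermite2D]⟩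
    | succ m ih =>
      intro n
      have h1 : (fun p : ℝ × ℝ => p.2 ^ n * p.1 ^ (m + 1))
          = mulX (fun p : ℝ × ℝ => p.2 ^ n * p.1 ^ m) := by
        funext p; simp [mulX]; ring
      rw [h1]
      have h2 : mulX (fun p : ℝ × ℝ => p.2 ^ n * p.1 ^ m) ∈
          Submodule.map mulX (Submodule.span ℝ {f : ℝ × ℝ → ℝ | ∃ j k : ℕ, k ≤ m ∧
            f = fun p : ℝ × ℝ => p.2 ^ j * hermite2D k p.1 p.2}) :=
        ⟨_, ih n, rfl⟩
      rw [Submodule.map_span] at h2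
      refine Submodule.span_le.mpr ?_ h2
      rintro _ ⟨f, ⟨j, k, hk, rfl⟩, rfl⟩
      match k with
      | 0 =>
        refine Submodule.subset_span ⟨j, 1, by omega, ?_⟩
        funext p
        simp [mulX, hermite2D]
        ring
      | k + 1 =>
        have heq : mulX (fun p : ℝ × ℝ => p.2 ^ j * hermite2D (k + 1) p.1 p.2)
            = ((k : ℝ) + 2) • (fun p : ℝ × ℝ => p.2 ^ j * hermite2D (k + 2) p.1 p.2)
              + (fun p : ℝ × ℝ => p.2 ^ (j + 1) * hermite2D k p.1 p.2) := by
          funext p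
          simp only [mulX, LinearMap.coe_mk, AddHom.coe_mk, Pi.add_apply, Pi.smul_apply,
            smul_eq_mul]
          rw [show p.1 * (p.2 ^ j * hermite2D (k + 1) p.1 p.2)
              = p.2 ^ j * (p.1 * hermite2D (k + 1) p.1 p.2) by ring,
            hermite_rec]
          ring
        rw [heq]
        refine Submodule.add_mem _ (Submodule.smul_mem _ _ ?_) ?_
        · exact Submodule.subset_span ⟨j, k + 2, by omega, rfl⟩
        · exact Submodule.subset_span ⟨j + 1, k, by omega, rfl⟩
  -- Step 2: replace `t^j` by the family `P i k`.
  refine Submodule.span_le.mpr ?_ (key m n)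
  rintro _ ⟨j, k, hk, rfl⟩
  have h3 : (fun p : ℝ × ℝ => p.2 ^ j * hermite2D k p.1 p.2)
      = mulH k (fun t : ℝ => t ^ j) := rfl
  rw [h3]
  have h4 : mulH k (fun t : ℝ => t ^ j) ∈
      Submodule.map (mulH k) (Submodule.span ℝ (Set.range (fun i : ℕ => P i k))) :=
    ⟨_, hP k j, rfl⟩
  rw [Submodule.map_span] at h4
  refine Submodule.span_le.mpr ?_ h4
  rintro _ ⟨g, ⟨i, rfl⟩, rfl⟩
  exact Submodule.subset_span ⟨i, k, hk, rfl⟩
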